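/- Let H be a complex Hilbert space, let T and A be bounded self-adjoint operators on H with T ∘ T = 16·I + A ∘ A, and suppose there exists a bounded bijective operator J on H with J ∘ T = −T ∘ J. Then σ(T) = {μ ∈ ℂ : there exists λ ∈ σ(A) with μ = √(16 + λ²) or μ = −√(16 + λ²)}. -/

import Mathlib

open Polynomial

/-- Spectral equality of Step 1 of the proof of Theorem 4.9: if `T, A` are bounded
self-adjoint with `T ∘ T = 16·I + A ∘ A` and there is a bounded bijective `J`
anticommuting with `T`, then `σ(T) = {±√(16 + λ²) : λ ∈ σ(A)}` (note `σ(A) ⊆ ℝ`). -/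
theorem stmt_2 {H : Type*} [NormedAddCommGroup H] [InnerProductSpace ℂ H] [CompleteSpace H]
    (T A : H →L[ℂ] H) (hT : IsSelfAdjoint T) (hA : IsSelfAdjoint A)
    (hTA : T ∘L T = (16 : ℂ) • (1 : H →L[ℂ] H) + A ∘L A)
    (J : H →L[ℂ] H) (hJ : Function.Bijective J)
    (hJT : J ∘L T = -(T ∘L J)) :
    spectrum ℂ T = {μ : ℂ | ∃ l : ℝ, (l : ℂ) ∈ spectrum ℂ A ∧
      (μ = (Real.sqrt (16 + l ^ 2) : ℝ) ∨ μ = -(Real.sqrt (16 + l ^ 2) : ℝ))} := by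
  rcases subsingleton_or_nontrivial H with hs | hn
  · ext μ
    simp only [spectrum.mem_iff, Set.mem_setOf_eq]
    constructor
    · intro h; exact absurd (isUnit_of_subsingleton _) h
    · rintro ⟨l, hl, -⟩
      exact absurd (isUnit_of_subsingleton _) (spectrum.mem_iff.mp hl)
  · -- J as a unit
    set e : H ≃L[ℂ] H := ContinuousLinearEquiv.ofBijective J
      (LinearMap.ker_eq_bot.mpr hJ.1) (LinearMap.range_eq_top.mpr hJ.2) with he
    have heJ : (e : H →L[ℂ] H) = J := ContinuousLinearEquiv.coe_ofBijective _ _ _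
    set u : (H →L[ℂ] H)ˣ :=
      ⟨J, (e.symm : H →L[ℂ] H), by
        ext x; simp [← heJ, ContinuousLinearMap.mul_apply], by
        ext x; simp [← heJ, ContinuousLinearMap.mul_apply]⟩ with hu
    -- symmetry of the spectrum
    have hsym : ∀ μ : ℂ, μ ∈ spectrum ℂ T → -μ ∈ spectrum ℂ T := by
      intro μ hμ
      have h1 : (u : H →L[ℂ] H) * T = -(T * (u : H →L[ℂ] H)) := hJT
      have hconj : (u : H →L[ℂ] H) * T * (↑u⁻¹ : H →L[ℂ] H) = -T := by
        rw [h1, neg_mul, mul_assoc, u.mul_inv, mul_one]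
      have hspec : spectrum ℂ (-T) = spectrum ℂ T := by
        rw [← hconj]; exact spectrum.units_conjugate
      rw [← hspec, ← spectrum.neg_eq]
      simpa using hμ
    -- spectra are real
    have hTreal : ∀ μ ∈ spectrum ℂ T, μ.im = 0 := fun μ hμ =>
      hT.im_eq_zero_of_mem_spectrum hμ
    -- spectral mapping for T^2
    have hT2 : spectrum ℂ (T * T) = (· ^ 2) '' spectrum ℂ T := by
      rw [← sq]; exact spectrum.map_pow T 2
    -- spectral mapping for 16 + A^2
    have hA2 : spectrum ℂ ((16 : ℂ) • (1 : H →L[ℂ] H) + A * A)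
        = (fun k => 16 + k ^ 2) '' spectrum ℂ A := by
      have haev : aeval A (C (16 : ℂ) + X ^ 2) = (16 : ℂ) • (1 : H →L[ℂ] H) + A * A := by
        simp [sq, Algebra.algebraMap_eq_smul_one]
      rw [← haev, spectrum.map_polynomial_aeval]
      ext k; simp
    have hkey : (· ^ 2) '' spectrum ℂ T = (fun k => 16 + k ^ 2) '' spectrum ℂ A := by
      rw [← hT2, ← hA2]
      exact congrArg (spectrum ℂ) hTA
    ext μ
    simp only [Set.mem_setOf_eq]
    constructor
    · intro hμ
      have h2 : μ ^ 2 ∈ (fun k => 16 + k ^ 2) '' spectrum ℂ A := by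
        rw [← hkey]; exact ⟨μ, hμ, rfl⟩
      obtain ⟨z, hz, hzμ⟩ := h2
      have hzim : z.im = 0 := hA.im_eq_zero_of_mem_spectrum hz
      have hzre : z = (z.re : ℂ) := by
        rw [← Complex.re_add_im z, hzim]; simp
      refine ⟨z.re, by rwa [← hzre], ?_⟩
      have hμim : μ.im = 0 := hTreal μ hμ
      have hμre : μ = (μ.re : ℂ) := by
        rw [← Complex.re_add_im μ, hμim]; simp
      have hr : (μ.re : ℝ) ^ 2 = 16 + z.re ^ 2 := by
        have : ((μ.re ^ 2 : ℝ) : ℂ) = ((16 + z.re ^ 2 : ℝ) : ℂ) := by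
          push_cast
          rw [← hμre, ← hzre, ← hzμ]
        exact_mod_cast this
      have hsq : Real.sqrt (16 + z.re ^ 2) = |μ.re| := by
        rw [← hr, Real.sqrt_sq_eq_abs]
      rcases abs_cases μ.re with ⟨h1, _⟩ | ⟨h1, _⟩
      · left; rw [hsq, h1]; exact hμre
      · right; rw [hsq, h1]; push_cast; rw [neg_neg]; exact hμre
    · rintro ⟨l, hl, hμ⟩
      have h2 : ((16 + l ^ 2 : ℝ) : ℂ) ∈ (· ^ 2) '' spectrum ℂ T := by
        rw [hkey]
        exact ⟨(l : ℂ), hl, by push_cast; ring⟩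
      obtain ⟨ν, hν, hν2⟩ := h2
      have hνim : ν.im = 0 := hTreal ν hν
      have hνre : ν = (ν.re : ℂ) := by
        rw [← Complex.re_add_im ν, hνim]; simp
      have hr : (ν.re : ℝ) ^ 2 = 16 + l ^ 2 := by
        have : ((ν.re ^ 2 : ℝ) : ℂ) = ((16 + l ^ 2 : ℝ) : ℂ) := by
          rw [Complex.ofReal_pow, ← hνre]; exact hν2
        exact_mod_cast this
      have hsq : Real.sqrt (16 + l ^ 2) = |ν.re| := by rw [← hr, Real.sqrt_sq_eq_abs]
      have hboth : ((Real.sqrt (16 + l ^ 2) : ℝ) : ℂ) ∈ spectrum ℂ T ∧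
          -((Real.sqrt (16 + l ^ 2) : ℝ) : ℂ) ∈ spectrum ℂ T := by
        rcases abs_cases ν.re with ⟨h1, _⟩ | ⟨h1, _⟩
        · constructor
          · rw [hsq, h1, ← hνre]; exact hν
          · rw [hsq, h1, ← hνre]; exact hsym ν hν
        · constructor
          · rw [hsq, h1]
            simp only [Complex.ofReal_neg]
            rw [← hνre]; exact hsym ν hν
          · rw [hsq, h1]
            simp only [Complex.ofReal_neg, neg_neg]
            rw [← hνre]; exact hν
      rcases hμ with rfl | rfl
      · exact hboth.1
      · exact hboth.2
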